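/- Define ξ(z) = z + √(z+1)·√(z−1) for z ∈ ℂ, with principal branches of the square roots. Then for any ζ ∈ ℂ with |ζ| > 1, the Joukowski transform z = (ζ + ζ⁻¹)/2 satisfies ξ(z) = ζ; i.e., ξ is the inverse of the Joukowski map on the exterior of the unit disk. -/

import Mathlib

open Complex

lemma half_re_im (u : ℂ) (hu : u ≠ 0) :
    (u ^ ((1:ℂ)/2)).re = Real.exp (Real.log ‖u‖ / 2) * Real.cos (Complex.arg u / 2) ∧
    (u ^ ((1:ℂ)/2)).im = Real.exp (Real.log ‖u‖ / 2) * Real.sin (Complex.arg u / 2) := by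
  rw [Complex.cpow_def_of_ne_zero hu]
  constructor <;>
  · simp [Complex.exp_re, Complex.exp_im, Complex.log_re, Complex.log_im, Complex.mul_re,
      Complex.mul_im]
    simp [div_eq_mul_inv]

lemma half_sq (u : ℂ) (hu : u ≠ 0) : (u ^ ((1:ℂ)/2))^2 = u := by
  rw [sq, ← Complex.cpow_add _ _ hu]
  norm_num

lemma half_signs (u : ℂ) (hu : u ≠ 0) :
    (0 < u.im → 0 < (u ^ ((1:ℂ)/2)).re ∧ 0 < (u ^ ((1:ℂ)/2)).im) ∧
    (u.im < 0 → 0 < (u ^ ((1:ℂ)/2)).re ∧ (u ^ ((1:ℂ)/2)).im < 0) ∧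
    (u.im = 0 → 0 < u.re → 0 < (u ^ ((1:ℂ)/2)).re ∧ (u ^ ((1:ℂ)/2)).im = 0) ∧
    (u.im = 0 → u.re < 0 → (u ^ ((1:ℂ)/2)).re = 0 ∧ 0 < (u ^ ((1:ℂ)/2)).im) := by
  obtain ⟨hre, him⟩ := half_re_im u hu
  have hE : 0 < Real.exp (Real.log ‖u‖ / 2) := Real.exp_pos _
  have hpi := Real.pi_pos
  refine ⟨?_, ?_, ?_, ?_⟩
  · intro h
    have h1 : 0 < u.arg := lt_of_le_of_ne (Complex.arg_nonneg_iff.mpr h.le)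
      (fun he => by rw [(Complex.arg_eq_zero_iff).mp he.symm |>.2] at h; exact lt_irrefl 0 h)
    have h2 : u.arg < Real.pi := lt_of_le_of_ne (Complex.arg_le_pi u)
      (fun he => by rw [(Complex.arg_eq_pi_iff).mp he |>.2] at h; exact lt_irrefl 0 h)
    constructor
    · rw [hre]
      exact mul_pos hE (Real.cos_pos_of_mem_Ioo ⟨by linarith, by linarith⟩)
    · rw [him]
      exact mul_pos hE (Real.sin_pos_of_pos_of_lt_pi (by linarith) (by linarith))
  · intro h
    have h1 : u.arg < 0 := Complex.arg_neg_iff.mpr h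
    have h2 : -Real.pi < u.arg := Complex.neg_pi_lt_arg u
    constructor
    · rw [hre]
      exact mul_pos hE (Real.cos_pos_of_mem_Ioo ⟨by linarith, by linarith⟩)
    · rw [him]
      have : Real.sin (u.arg / 2) < 0 :=
        Real.sin_neg_of_neg_of_neg_pi_lt (by linarith) (by linarith)
      nlinarith
  · intro h h'
    have h0 : u.arg = 0 := Complex.arg_eq_zero_iff.mpr ⟨h'.le, h⟩
    rw [hre, him, h0]
    simp [hE]
  · intro h h'
    have h0 : u.arg = Real.pi := Complex.arg_eq_pi_iff.mpr ⟨h', h⟩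
    rw [hre, him, h0]
    constructor
    · simp [Real.cos_pi_div_two]
    · have : Real.sin (Real.pi / 2) = 1 := Real.sin_pi_div_two
      rw [this]; simpa using hE

set_option maxHeartbeats 1000000 in
/-- With `ξ(z) = z + √(z+1)·√(z−1)` (principal branches), for `|ζ| > 1` the Joukowski
transform `z = (ζ + ζ⁻¹)/2` satisfies `ξ(z) = ζ`. -/
theorem xi_inverse_joukowski (ζ : ℂ) (h : 1 < ‖ζ‖) :
    ((ζ + ζ⁻¹)/2) + ((ζ + ζ⁻¹)/2 + 1)^((1:ℂ)/2) * ((ζ + ζ⁻¹)/2 - 1)^((1:ℂ)/2) = ζ := by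
  have hζ0 : ζ ≠ 0 := by
    intro h0; rw [h0] at h; simp at h; linarith
  have hns : 1 < Complex.normSq ζ := by
    have := Complex.sq_norm ζ; nlinarith
  set z : ℂ := (ζ + ζ⁻¹)/2 with hz
  have hz1 : z + 1 ≠ 0 := by
    intro h0
    have h1 : (ζ + 1)^2 = 0 := by
      rw [hz] at h0
      linear_combination (2*ζ) * h0 - mul_inv_cancel₀ hζ0
    have h2 : ζ = -1 := by
      have := pow_eq_zero_iff (n := 2) (by norm_num) |>.mp h1
      linear_combination this
    rw [h2] at h; simp at h
  have hz2 : z - 1 ≠ 0 := by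
    intro h0
    have h1 : (ζ - 1)^2 = 0 := by
      rw [hz] at h0
      linear_combination (2*ζ) * h0 - mul_inv_cancel₀ hζ0
    have h2 : ζ = 1 := by
      have := pow_eq_zero_iff (n := 2) (by norm_num) |>.mp h1
      linear_combination this
    rw [h2] at h; simp at h
  set a : ℂ := (z + 1)^((1:ℂ)/2) with ha
  set b : ℂ := (z - 1)^((1:ℂ)/2) with hb
  have hs1 : a^2 = z + 1 := half_sq _ hz1
  have hs2 : b^2 = z - 1 := half_sq _ hz2
  have hw : (a*b - (ζ - ζ⁻¹)/2) * (a*b + (ζ - ζ⁻¹)/2) = 0 := by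
    have hq : (a*b)^2 = ((ζ - ζ⁻¹)/2)^2 := by
      rw [mul_pow, hs1, hs2, hz]
      field_simp
      ring
    linear_combination hq
  rcases mul_eq_zero.mp hw with h1 | h1
  · have hab : a*b = (ζ - ζ⁻¹)/2 := sub_eq_zero.mp h1
    rw [hab, hz]; ring
  · exfalso
    have hab : a*b = -((ζ - ζ⁻¹)/2) := eq_neg_of_add_eq_zero_left h1
    -- positivity of P
    have hP : 0 < a.re*b.re + a.im*b.im := by
      have sa := half_signs (z+1) hz1
      have sb := half_signs (z-1) hz2
      have ia : (z+1).im = z.im := by simp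
      have ib : (z-1).im = z.im := by simp
      rcases lt_trichotomy z.im 0 with hi | hi | hi
      · obtain ⟨h1a, h2a⟩ := sa.2.1 (by rw [ia]; exact hi)
        obtain ⟨h1b, h2b⟩ := sb.2.1 (by rw [ib]; exact hi)
        rw [← ha] at h1a h2a; rw [← hb] at h1b h2b
        nlinarith
      · -- z.im = 0 : ζ is real with |ζ.re| > 1
        have h2z : (2*z) = ζ + ζ⁻¹ := by rw [hz]; ring
        have him : 2*z.im = ζ.im - ζ.im / Complex.normSq ζ := by
          have := congrArg Complex.im h2z
          simpa [Complex.mul_im, Complex.add_im, Complex.inv_im, div_eq_mul_inv, sub_eq_add_neg] using this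
        have hnsne : Complex.normSq ζ ≠ 0 := by positivity
        have hζim : ζ.im = 0 := by
          rw [hi] at him
          have key : ζ.im * (Complex.normSq ζ - 1) = 0 := by
            field_simp at him
            linarith [him]
          rcases mul_eq_zero.mp key with hk | hk
          · exact hk
          · exfalso; linarith
        have hre : 2*z.re = ζ.re + ζ.re / Complex.normSq ζ := by
          have := congrArg Complex.re h2z
          simpa [Complex.mul_re, Complex.add_re, Complex.inv_re, div_eq_mul_inv] using this
        have hreSq : 1 < ζ.re^2 := by
          have : Complex.normSq ζ = ζ.re^2 + ζ.im^2 := by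
            rw [Complex.normSq_apply]; ring
          rw [hζim] at this; nlinarith
        have hnseq : Complex.normSq ζ = ζ.re^2 := by
          rw [Complex.normSq_apply, hζim]; ring
        rcases lt_trichotomy ζ.re 0 with ht | ht | ht
        · -- ζ.re < -1, so z.re < -1
          have htlt : ζ.re < -1 := by nlinarith
          have hzre : z.re < -1 := by
            rw [hnseq] at hre
            have hne : ζ.re ≠ 0 := ne_of_lt ht
            have h3 : 2*z.re = ζ.re + 1/ζ.re := by
              rw [hre]; field_simp
            have h4 : ζ.re * (2*z.re) = ζ.re^2 + 1 := by
              field_simp at h3; nlinarith [h3]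
            nlinarith [mul_pos (show (0:ℝ) < -(ζ.re+1) by linarith)
              (show (0:ℝ) < -(ζ.re+1) by linarith), h4]
          obtain ⟨h1a, h2a⟩ := sa.2.2.2 (by rw [ia]; exact hi) (by simp; linarith)
          obtain ⟨h1b, h2b⟩ := sb.2.2.2 (by rw [ib]; exact hi) (by simp; linarith)
          rw [← ha] at h1a h2a; rw [← hb] at h1b h2b
          nlinarith
        · nlinarith
        · -- ζ.re > 1, so z.re > 1
          have htgt : 1 < ζ.re := by nlinarith
          have hzre : 1 < z.re := by
            rw [hnseq] at hre
            have hne : ζ.re ≠ 0 := ne_of_gt ht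
            have h3 : 2*z.re = ζ.re + 1/ζ.re := by
              rw [hre]; field_simp
            have h4 : ζ.re * (2*z.re) = ζ.re^2 + 1 := by
              field_simp at h3; nlinarith [h3]
            nlinarith [mul_pos (show (0:ℝ) < ζ.re-1 by linarith)
              (show (0:ℝ) < ζ.re-1 by linarith), h4]
          obtain ⟨h1a, h2a⟩ := sa.2.2.1 (by rw [ia]; exact hi) (by simp; linarith)
          obtain ⟨h1b, h2b⟩ := sb.2.2.1 (by rw [ib]; exact hi) (by simp; linarith)
          rw [← ha] at h1a h2a; rw [← hb] at h1b h2b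
          nlinarith
      · obtain ⟨h1a, h2a⟩ := sa.1 (by rw [ia]; exact hi)
        obtain ⟨h1b, h2b⟩ := sb.1 (by rw [ib]; exact hi)
        rw [← ha] at h1a h2a; rw [← hb] at h1b h2b
        nlinarith
    -- contradiction: |ζ| would be < |ζ⁻¹|
    have hzeta : z - a*b = ζ := by rw [hab, hz]; ring
    have hinv : z + a*b = ζ⁻¹ := by rw [hab, hz]; ring
    have hzab : z = (a^2 + b^2)/2 := by rw [hs1, hs2]; ring
    have e1 : z + a*b = (a+b)^2/2 := by rw [hzab]; ring
    have e2 : z - a*b = (a-b)^2/2 := by rw [hzab]; ring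
    have k1 : Complex.normSq (a-b) < Complex.normSq (a+b) := by
      simp only [Complex.normSq_apply, Complex.add_re, Complex.add_im, Complex.sub_re,
        Complex.sub_im]
      nlinarith
    have hnn : 0 ≤ Complex.normSq (a-b) := Complex.normSq_nonneg _
    have k2 : Complex.normSq ζ < Complex.normSq ζ⁻¹ := by
      rw [← hinv, ← hzeta, e1, e2, map_div₀, map_div₀, map_pow, map_pow]
      have h4 : Complex.normSq 2 = 4 := by
        simp [Complex.normSq_apply]
        norm_num
      rw [h4]
      nlinarith
    have k3 : Complex.normSq ζ⁻¹ < 1 := by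
      rw [map_inv₀]
      have := inv_lt_one_of_one_lt₀ hns
      linarith
    linarith
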